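/- Let N ≥ 3 and 2 ≤ ν ≤ N−1, and let p_ν = b_{[N]} + (r_{ν+1}/r_1)(b_{[1]} − b_{[N]}) with r_j = √(1/j − 1/N). Then p_ν has nonnegative coordinates summing to 1, its coordinates are nonincreasing (p_ν ∈ Δ̃), and ∑_{i=1}^{N} (p_ν)_i² = 1/(ν+1); in particular p_ν lies in the closure of A_ν = {ω ∈ Δ̃ : ν ≤ (∑_{i=1}^{N} ω_i²)^{-1} < ν+1}. -/

import Mathlib

open Finset

lemma aux_sum_ite (N : ℕ) (hN : 1 ≤ N) (A B : ℝ) :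
    ∑ i : Fin N, (if (i : ℕ) = 0 then A else B) = A + ((N : ℝ) - 1) * B := by
  haveI : NeZero N := ⟨by omega⟩
  have h : ∀ i : Fin N, (if (i : ℕ) = 0 then A else B)
      = B + (if i = (0 : Fin N) then A - B else 0) := by
    intro i
    by_cases hi : i = 0
    · simp [hi]
    · have hv : (i : ℕ) ≠ 0 := by
        exact fun h => hi (Fin.ext (by rw [h]; simp))
      simp [hv, hi]
  rw [Finset.sum_congr rfl (fun i _ => h i), Finset.sum_add_distrib, Finset.sum_const,
    Finset.sum_ite_eq' Finset.univ (0 : Fin N)]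
  simp [Finset.card_univ]
  ring

lemma aux_omega (N : ℕ) (hN : 1 ≤ N) (c : ℝ) (hc0 : 0 ≤ c) (hc1 : c ≤ 1) :
    (∀ i : Fin N, 0 ≤ 1/(N:ℝ) + c * ((if (i:ℕ) = 0 then (1:ℝ) else 0) - 1/N)) ∧
    (∑ i : Fin N, (1/(N:ℝ) + c * ((if (i:ℕ) = 0 then (1:ℝ) else 0) - 1/N)) = 1) ∧
    (∀ i j : Fin N, i ≤ j →
      (1/(N:ℝ) + c * ((if (j:ℕ) = 0 then (1:ℝ) else 0) - 1/N))
        ≤ 1/(N:ℝ) + c * ((if (i:ℕ) = 0 then (1:ℝ) else 0) - 1/N)) ∧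
    (∑ i : Fin N, (1/(N:ℝ) + c * ((if (i:ℕ) = 0 then (1:ℝ) else 0) - 1/N))^2
      = 1/N + c^2 * (1 - 1/N)) := by
  have hN0 : (0:ℝ) < N := by exact_mod_cast (by omega : 0 < N)
  have hN1 : (1:ℝ) ≤ N := by exact_mod_cast hN
  have h1N : 1/(N:ℝ) ≤ 1 := by rw [div_le_one hN0]; linarith
  have h1N0 : 0 < 1/(N:ℝ) := by positivity
  refine ⟨?_, ?_, ?_, ?_⟩
  · intro i
    by_cases hi : (i:ℕ) = 0
    · simp only [hi, if_true]
      nlinarith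
    · simp only [hi, if_false]
      nlinarith
  · have h : ∀ i : Fin N, (1/(N:ℝ) + c * ((if (i:ℕ) = 0 then (1:ℝ) else 0) - 1/N))
        = if (i:ℕ) = 0 then (1/(N:ℝ) + c * (1 - 1/N)) else (1/(N:ℝ) + c * (0 - 1/N)) := by
      intro i; split <;> ring
    rw [Finset.sum_congr rfl (fun i _ => h i), aux_sum_ite N hN]
    field_simp
    ring
  · intro i j hij
    by_cases hj : (j:ℕ) = 0
    · have hle := (Fin.le_def.1 hij)
      have hi : (i:ℕ) = 0 := by omega
      simp [hi, hj]
    · by_cases hi : (i:ℕ) = 0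
      · simp only [hi, hj, if_true, if_false]
        nlinarith
      · simp [hi, hj]
  · have h : ∀ i : Fin N, (1/(N:ℝ) + c * ((if (i:ℕ) = 0 then (1:ℝ) else 0) - 1/N))^2
        = if (i:ℕ) = 0 then (1/(N:ℝ) + c * (1 - 1/N))^2 else (1/(N:ℝ) + c * (0 - 1/N))^2 := by
      intro i; split <;> ring
    rw [Finset.sum_congr rfl (fun i _ => h i), aux_sum_ite N hN]
    field_simp
    ring

set_option maxHeartbeats 1000000 in
/-- For `3 ≤ N`, `2 ≤ ν ≤ N-1`, the point
`p_ν = b_{[N]} + (r_{ν+1}/r_1)(b_{[1]} - b_{[N]})`, with `r_j = √(1/j - 1/N)`,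
has nonnegative coordinates summing to `1`, nonincreasing coordinates
(`p_ν ∈ Δ̃`), satisfies `∑ (p_ν)_i² = 1/(ν+1)`, and lies in the closure of
`A_ν = {ω ∈ Δ̃ : ν ≤ (∑ ω_i²)⁻¹ < ν+1}`. -/
theorem emp_p_nu_in_closure (N ν : ℕ) (hN : 3 ≤ N) (hν1 : 2 ≤ ν) (hν2 : ν ≤ N - 1)
    (r : ℕ → ℝ) (hr : ∀ j, r j = Real.sqrt (1 / (j : ℝ) - 1 / (N : ℝ)))
    (p : Fin N → ℝ)
    (hp : ∀ i : Fin N,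
      p i = 1 / (N : ℝ) + (r (ν + 1) / r 1) * ((if (i : ℕ) = 0 then (1 : ℝ) else 0) - 1 / N)) :
    (∀ i, 0 ≤ p i) ∧ (∑ i, p i = 1) ∧ (∀ i j : Fin N, i ≤ j → p j ≤ p i) ∧
    (∑ i, p i ^ 2 = 1 / ((ν : ℝ) + 1)) ∧
    p ∈ closure {ω : Fin N → ℝ |
        (∀ i, 0 ≤ ω i) ∧ (∑ i, ω i = 1) ∧ (∀ i j : Fin N, i ≤ j → ω j ≤ ω i) ∧
        (ν : ℝ) ≤ (∑ i, ω i ^ 2)⁻¹ ∧ (∑ i, ω i ^ 2)⁻¹ < (ν : ℝ) + 1} := by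
  have hN0 : (0:ℝ) < N := by exact_mod_cast (by omega : 0 < N)
  have hN3 : (3:ℝ) ≤ N := by exact_mod_cast hN
  have hνN : ν + 1 ≤ N := by omega
  have hν0 : (0:ℝ) < ν := by exact_mod_cast (by omega : 0 < ν)
  have hνNR : (ν:ℝ) + 1 ≤ N := by exact_mod_cast hνN
  have hνR : (ν:ℝ) ≤ N := by linarith
  have h1N1 : 1/(N:ℝ) < 1 := by rw [div_lt_one hN0]; linarith
  have hsub : 0 < 1 - 1/(N:ℝ) := by linarith
  -- square facts
  have hr1 : r 1 = Real.sqrt (1 - 1/N) := by rw [hr]; norm_num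
  have hr1pos : 0 < r 1 := by rw [hr1]; exact Real.sqrt_pos.2 hsub
  have hr1sq : r 1 ^ 2 = 1 - 1/(N:ℝ) := by rw [hr1, Real.sq_sqrt hsub.le]
  have hνsubpos : (0:ℝ) ≤ 1/((ν:ℝ)+1) - 1/N := by
    have := one_div_le_one_div_of_le (by positivity : (0:ℝ) < (ν:ℝ)+1) hνNR
    linarith
  have hνsubpos' : (0:ℝ) ≤ 1/(ν:ℝ) - 1/N := by
    have := one_div_le_one_div_of_le hν0 hνR
    linarith
  have hrν1sq : r (ν+1) ^ 2 = 1/((ν:ℝ)+1) - 1/N := by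
    rw [hr]; push_cast; rw [Real.sq_sqrt hνsubpos]
  have hrνsq : r ν ^ 2 = 1/(ν:ℝ) - 1/N := by
    rw [hr]; rw [Real.sq_sqrt hνsubpos']
  have hrν1nn : 0 ≤ r (ν+1) := by rw [hr]; exact Real.sqrt_nonneg _
  have hrνnn : 0 ≤ r ν := by rw [hr]; exact Real.sqrt_nonneg _
  set t := r (ν+1) / r 1 with htdef
  set d := r ν / r 1 with hddef
  have ht0 : 0 ≤ t := div_nonneg hrν1nn hr1pos.le
  have hd0 : 0 ≤ d := div_nonneg hrνnn hr1pos.le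
  -- t < d < 1
  have hrlt : r (ν+1) < r ν := by
    rw [hr, hr]; push_cast
    apply Real.sqrt_lt_sqrt (by push_cast at hνsubpos ⊢; linarith)
    have : 1/((ν:ℝ)+1) < 1/(ν:ℝ) := one_div_lt_one_div_of_lt hν0 (by linarith)
    linarith
  have hrlt1 : r ν < r 1 := by
    rw [hr, hr1]
    apply Real.sqrt_lt_sqrt (by push_cast; linarith)
    have : 1/(ν:ℝ) < 1 := by rw [div_lt_one hν0]; exact_mod_cast (by omega : 1 < ν)
    push_cast; linarith
  have htd : t < d := (div_lt_div_iff_of_pos_right hr1pos).2 hrlt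
  have hd1 : d < 1 := by rw [div_lt_one hr1pos]; exact hrlt1
  have ht1 : t < 1 := htd.trans hd1
  -- key square identities
  have hsubne : (1 - 1/(N:ℝ)) ≠ 0 := ne_of_gt hsub
  have hT : t^2 * (1 - 1/(N:ℝ)) = 1/((ν:ℝ)+1) - 1/N := by
    rw [htdef, div_pow, hr1sq, div_mul_cancel₀ _ hsubne, hrν1sq]
  have hD : d^2 * (1 - 1/(N:ℝ)) = 1/(ν:ℝ) - 1/N := by
    rw [hddef, div_pow, hr1sq, div_mul_cancel₀ _ hsubne, hrνsq]
  obtain ⟨h1, h2, h3, h4⟩ := aux_omega N (by omega) t ht0 ht1.le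
  refine ⟨fun i => by rw [hp]; exact h1 i, by simp only [hp]; exact h2,
    fun i j hij => by rw [hp, hp]; exact h3 i j hij, ?_, ?_⟩
  · simp only [hp]
    rw [h4, hT]; ring
  · -- closure
    set u : ℕ → ℝ := fun n => t + (d - t)/(n+1) with hudef
    have hut : ∀ n, t < u n := by
      intro n
      have : 0 < (d - t)/((n:ℝ)+1) := div_pos (by linarith) (by positivity)
      simp only [hudef]; linarith
    have hud : ∀ n, u n ≤ d := by
      intro n
      have h1 : (d - t)/((n:ℝ)+1) ≤ d - t := by
        apply div_le_self (by linarith)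
        have : (0:ℝ) ≤ (n:ℝ) := Nat.cast_nonneg n
        linarith
      simp only [hudef]; linarith
    set ω : ℕ → Fin N → ℝ :=
      fun n i => 1/(N:ℝ) + u n * ((if (i:ℕ) = 0 then (1:ℝ) else 0) - 1/N) with hωdef
    apply mem_closure_of_tendsto (f := ω) (b := Filter.atTop)
    · rw [tendsto_pi_nhds]
      intro i
      rw [hp i]
      have hu : Filter.Tendsto u Filter.atTop (nhds t) := by
        have h0 : Filter.Tendsto (fun n : ℕ => (d - t)/((n:ℝ)+1)) Filter.atTop (nhds 0) := by
          have := tendsto_one_div_add_atTop_nhds_zero_nat (𝕜 := ℝ)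
          have h2 : Filter.Tendsto (fun n : ℕ => (d - t) * (1/((n:ℝ)+1)))
              Filter.atTop (nhds ((d - t) * 0)) := this.const_mul _
          simpa [div_eq_mul_inv] using h2
        have := h0.const_add t
        simpa [hudef] using this
      have : Filter.Tendsto (fun n => u n * ((if (i:ℕ) = 0 then (1:ℝ) else 0) - 1/N))
          Filter.atTop (nhds (t * ((if (i:ℕ) = 0 then (1:ℝ) else 0) - 1/N))) :=
        hu.mul_const _
      simpa [hωdef] using this.const_add (1/(N:ℝ))
    · apply Filter.Eventually.of_forall
      intro n
      have hu0 : 0 ≤ u n := ht0.trans (hut n).le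
      have hu1 : u n ≤ 1 := (hud n).trans hd1.le
      obtain ⟨g1, g2, g3, g4⟩ := aux_omega N (by omega) (u n) hu0 hu1
      have hSpos : 0 < ∑ i : Fin N, ω n i ^ 2 := by
        rw [g4]
        have : 0 ≤ (u n)^2 * (1 - 1/(N:ℝ)) := mul_nonneg (sq_nonneg _) hsub.le
        have h1N0 : 0 < 1/(N:ℝ) := by positivity
        linarith
      refine ⟨g1, g2, g3, ?_, ?_⟩
      · -- ν ≤ S⁻¹
        have hle : ∑ i : Fin N, ω n i ^ 2 ≤ 1/(ν:ℝ) := by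
          rw [g4]
          have hsq : (u n)^2 ≤ d^2 := pow_le_pow_left₀ hu0 (hud n) 2
          have := mul_le_mul_of_nonneg_right hsq hsub.le
          linarith
        calc (ν:ℝ) = (1/(ν:ℝ))⁻¹ := by rw [one_div, inv_inv]
          _ ≤ (∑ i : Fin N, ω n i ^ 2)⁻¹ := inv_anti₀ hSpos hle
      · -- S⁻¹ < ν + 1
        have hlt : 1/((ν:ℝ)+1) < ∑ i : Fin N, ω n i ^ 2 := by
          rw [g4]
          have hsq : t^2 < (u n)^2 := by
            have h := hut n
            nlinarith
          have := mul_lt_mul_of_pos_right hsq hsub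
          linarith
        calc (∑ i : Fin N, ω n i ^ 2)⁻¹ < (1/((ν:ℝ)+1))⁻¹ :=
              inv_strictAnti₀ (by positivity) hlt
          _ = (ν:ℝ)+1 := by rw [one_div, inv_inv]
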